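/- arXiv:1211.0722 — 2 statements merged into one kernel-verified Lean document; each statement's English description precedes it below -/
import Mathlib

section
/- Let h : ℝ → ℂ and let φ(t) = ∑_{ℓ=0}^{L-1} α_ℓ h(t - τ_ℓ) with α_ℓ ∈ ℂ and τ_ℓ ∈ [0, τ). If h is integrable and supported in [0, τ - max_ℓ τ_ℓ], then the k-th Fourier series coefficient of φ on [0, τ], c[k] = (1/τ)∫_0^τ φ(t) e^{-j2πkt/τ} dt, equals (1/τ) H(2πk/τ) ∑_{ℓ=0}^{L-1} α_ℓ e^{-j2πkτ_ℓ/τ}, where H(ω) = ∫_ℝ h(t) e^{-jωt} dt. -/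
open Complex Finset MeasureTheory

theorem fourier_coeff_of_pulse_stream (τ : ℝ) (hτ : 0 < τ) (L : ℕ)
    (h : ℝ → ℂ) (hint : Integrable h)
    (α : Fin L → ℂ) (τd : Fin L → ℝ)
    (hτd : ∀ ℓ, τd ℓ ∈ Set.Ico (0 : ℝ) τ)
    (hsupp : ∀ t : ℝ, h t ≠ 0 → 0 ≤ t ∧ ∀ ℓ, t ≤ τ - τd ℓ)
    (k : ℤ) :
    (1 / (τ : ℂ)) * ∫ t in (0 : ℝ)..τ,
        (∑ ℓ, α ℓ * h (t - τd ℓ)) *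
          Complex.exp (-Complex.I * 2 * Real.pi * (k : ℂ) * (t : ℂ) / (τ : ℂ)) =
      (1 / (τ : ℂ)) *
        (∫ t : ℝ, h t * Complex.exp (-Complex.I * (2 * Real.pi * (k : ℂ) / (τ : ℂ)) * (t : ℂ))) *
        ∑ ℓ, α ℓ * Complex.exp (-Complex.I * 2 * Real.pi * (k : ℂ) * (τd ℓ : ℂ) / (τ : ℂ)) := by
  have hτC : (τ : ℂ) ≠ 0 := by exact_mod_cast hτ.ne'
  have hEnorm : ∀ x : ℝ,
      ‖Complex.exp (-Complex.I * 2 * Real.pi * (k : ℂ) * (x : ℂ) / (τ : ℂ))‖ ≤ 1 := by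
    intro x
    have : Complex.exp (-Complex.I * 2 * Real.pi * (k : ℂ) * (x : ℂ) / (τ : ℂ))
        = Complex.exp (((-(2 * Real.pi * k * x / τ) : ℝ) : ℂ) * Complex.I) := by
      congr 1; push_cast; ring
    rw [this, Complex.norm_exp_ofReal_mul_I]
  have hEcont : Continuous fun t : ℝ =>
      Complex.exp (-Complex.I * 2 * Real.pi * (k : ℂ) * (t : ℂ) / (τ : ℂ)) := by fun_prop
  have hInt : ∀ ℓ : Fin L, Integrable (fun t : ℝ => h (t - τd ℓ) *
      Complex.exp (-Complex.I * 2 * Real.pi * (k : ℂ) * (t : ℂ) / (τ : ℂ))) := by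
    intro ℓ
    have h1 : Integrable (fun t : ℝ => h (t - τd ℓ)) := hint.comp_sub_right _
    have := h1.bdd_mul (c := 1) hEcont.aestronglyMeasurable (Filter.Eventually.of_forall hEnorm)
    simpa [mul_comm] using this
  -- value of a single shifted integral
  have key : ∀ ℓ : Fin L,
      (∫ t in (0:ℝ)..τ, h (t - τd ℓ) *
          Complex.exp (-Complex.I * 2 * Real.pi * (k : ℂ) * (t : ℂ) / (τ : ℂ))) =
        (∫ t : ℝ, h t * Complex.exp (-Complex.I * (2 * Real.pi * (k : ℂ) / (τ : ℂ)) * (t : ℂ))) *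
          Complex.exp (-Complex.I * 2 * Real.pi * (k : ℂ) * (τd ℓ : ℂ) / (τ : ℂ)) := by
    intro ℓ
    have hfull : (∫ t in (0:ℝ)..τ, h (t - τd ℓ) *
          Complex.exp (-Complex.I * 2 * Real.pi * (k : ℂ) * (t : ℂ) / (τ : ℂ))) =
        ∫ t : ℝ, h (t - τd ℓ) *
          Complex.exp (-Complex.I * 2 * Real.pi * (k : ℂ) * (t : ℂ) / (τ : ℂ)) := by
      rw [intervalIntegral.integral_of_le hτ.le, ← MeasureTheory.integral_Icc_eq_integral_Ioc]
      apply MeasureTheory.setIntegral_eq_integral_of_forall_compl_eq_zero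
      intro x hx
      by_contra hne
      have hh : h (x - τd ℓ) ≠ 0 := fun h0 => hne (by simp [h0])
      obtain ⟨h1, h2⟩ := hsupp _ hh
      have h2' := h2 ℓ
      exact hx ⟨by linarith [(hτd ℓ).1], by linarith⟩
    rw [hfull]
    have hshift : (∫ t : ℝ, h (t - τd ℓ) *
          Complex.exp (-Complex.I * 2 * Real.pi * (k : ℂ) * (t : ℂ) / (τ : ℂ))) =
        ∫ s : ℝ, h s *
          Complex.exp (-Complex.I * 2 * Real.pi * (k : ℂ) * ((s + τd ℓ : ℝ) : ℂ) / (τ : ℂ)) := by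
      rw [← MeasureTheory.integral_sub_right_eq_self (fun s => h s *
        Complex.exp (-Complex.I * 2 * Real.pi * (k : ℂ) * ((s + τd ℓ : ℝ) : ℂ) / (τ : ℂ))) (τd ℓ)]
      simp
    rw [hshift]
    have hEsplit : ∀ s : ℝ,
        Complex.exp (-Complex.I * 2 * Real.pi * (k : ℂ) * ((s + τd ℓ : ℝ) : ℂ) / (τ : ℂ)) =
        Complex.exp (-Complex.I * (2 * Real.pi * (k : ℂ) / (τ : ℂ)) * (s : ℂ)) *
          Complex.exp (-Complex.I * 2 * Real.pi * (k : ℂ) * (τd ℓ : ℂ) / (τ : ℂ)) := by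
      intro s
      rw [← Complex.exp_add]
      congr 1
      push_cast
      field_simp
      ring
    simp_rw [hEsplit, ← mul_assoc]
    rw [MeasureTheory.integral_mul_const]
  -- now the main computation
  have hrw : ∀ t : ℝ, (∑ ℓ, α ℓ * h (t - τd ℓ)) *
      Complex.exp (-Complex.I * 2 * Real.pi * (k : ℂ) * (t : ℂ) / (τ : ℂ))
      = ∑ ℓ, α ℓ * (h (t - τd ℓ) *
          Complex.exp (-Complex.I * 2 * Real.pi * (k : ℂ) * (t : ℂ) / (τ : ℂ))) := by
    intro t; rw [Finset.sum_mul]; simp [mul_assoc]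
  calc (1 / (τ : ℂ)) * ∫ t in (0:ℝ)..τ, (∑ ℓ, α ℓ * h (t - τd ℓ)) *
          Complex.exp (-Complex.I * 2 * Real.pi * (k : ℂ) * (t : ℂ) / (τ : ℂ))
      = (1 / (τ : ℂ)) * ∫ t in (0:ℝ)..τ, ∑ ℓ, α ℓ * (h (t - τd ℓ) *
          Complex.exp (-Complex.I * 2 * Real.pi * (k : ℂ) * (t : ℂ) / (τ : ℂ))) := by
        congr 1; exact intervalIntegral.integral_congr fun t _ => hrw t
    _ = (1 / (τ : ℂ)) * ∑ ℓ, ∫ t in (0:ℝ)..τ, α ℓ * (h (t - τd ℓ) *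
          Complex.exp (-Complex.I * 2 * Real.pi * (k : ℂ) * (t : ℂ) / (τ : ℂ))) := by
        congr 1
        exact intervalIntegral.integral_finset_sum
          fun ℓ _ => ((hInt ℓ).const_mul (α ℓ)).intervalIntegrable
    _ = (1 / (τ : ℂ)) * ∑ ℓ, α ℓ * ∫ t in (0:ℝ)..τ, h (t - τd ℓ) *
          Complex.exp (-Complex.I * 2 * Real.pi * (k : ℂ) * (t : ℂ) / (τ : ℂ)) := by
        congr 1; exact Finset.sum_congr rfl fun ℓ _ => intervalIntegral.integral_const_mul _ _
    _ = (1 / (τ : ℂ)) *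
        (∫ t : ℝ, h t * Complex.exp (-Complex.I * (2 * Real.pi * (k : ℂ) / (τ : ℂ)) * (t : ℂ))) *
        ∑ ℓ, α ℓ * Complex.exp (-Complex.I * 2 * Real.pi * (k : ℂ) * (τd ℓ : ℂ) / (τ : ℂ)) := by
        simp_rw [key]
        rw [Finset.mul_sum, Finset.mul_sum]
        exact Finset.sum_congr rfl fun ℓ _ => by ring
end

section
/- Fix grid size M ≥ 1 and suppose Doppler frequencies of L targets lie on the grid {2πm/(τM)}. If the number of sampled Fourier coefficients per pulse satisfies |κ| ≥ 2L with κ a set of consecutive integers on which H(2πk/τ) ≠ 0, and P = M pulses are sampled, then the target parameters {α_ℓ, τ_ℓ, ν_ℓ} (with distinct pairs (τ_ℓ, ν_ℓ)) are uniquely determined by the |κ|·M samples {c_p[k]}: for each grid bin m, the focused coefficients Ψ_{ν̃_m}[k] determine an exponential-sum problem with at most L distinct delays, which has a unique solution given 2L consecutive samples. -/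
open Complex Finset

section DopplerAux

open Matrix

/-- Vandermonde system with distinct nodes has trivial kernel. -/
lemma doppler_vand_zero {n : ℕ} (v : Fin n → ℂ) (hv : Function.Injective v)
    (x : Fin n → ℂ) (h : ∀ j : Fin n, ∑ i, x i * v i ^ (j : ℕ) = 0) :
    ∀ i, x i = 0 := by
  have hdet : (Matrix.vandermonde v).det ≠ 0 := by
    rw [Matrix.det_vandermonde]
    refine Finset.prod_ne_zero_iff.2 fun i _ => Finset.prod_ne_zero_iff.2 fun j hj => ?_
    have hij : i ≠ j := ((Finset.mem_Ioi.1 hj).ne)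
    exact sub_ne_zero.2 fun hh => hij (hv hh.symm)
  have hdet' : ((Matrix.vandermonde v)ᵀ).det ≠ 0 := by rwa [Matrix.det_transpose]
  have hmv : ((Matrix.vandermonde v)ᵀ).mulVec x = 0 := by
    funext j
    have := h j
    simpa [Matrix.mulVec, Matrix.vandermonde, dotProduct, mul_comm] using this
  have := Matrix.eq_zero_of_mulVec_eq_zero hdet' hmv
  exact fun i => congrFun this i

/-- A vanishing exponential sum over distinct nonzero nodes has zero coefficients. -/
lemma doppler_expsum_zero {n : ℕ} (T : Finset ℂ) (hT : T.card ≤ n) (h0 : ∀ w ∈ T, w ≠ 0)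
    (b : ℂ → ℂ) (k0 : ℤ)
    (h : ∀ j : ℕ, j < n → ∑ w ∈ T, b w * w ^ (k0 + j) = 0) :
    ∀ w ∈ T, b w = 0 := by
  set d := T.card with hd
  let e : Fin d ≃ T := T.equivFin.symm
  set v : Fin d → ℂ := fun i => ((e i : T) : ℂ) with hv
  have hvinj : Function.Injective v := by
    intro i i' hii
    exact e.injective (Subtype.ext hii)
  set x : Fin d → ℂ := fun i => b (v i) * v i ^ k0 with hx
  have key : ∀ i, x i = 0 := by
    refine doppler_vand_zero v hvinj x fun j => ?_
    have hsum : ∑ i, x i * v i ^ (j : ℕ) = ∑ w ∈ T, b w * w ^ (k0 + (j : ℕ)) := by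
      rw [← Finset.sum_coe_sort T (fun w => b w * w ^ (k0 + (j : ℕ))),
        ← Equiv.sum_comp e (fun t : T => b (t : ℂ) * ((t : ℂ)) ^ (k0 + (j : ℕ)))]
      refine Finset.sum_congr rfl fun i _ => ?_
      have hw0 : v i ≠ 0 := h0 _ (e i).2
      show x i * v i ^ (j : ℕ) = b (v i) * v i ^ (k0 + (j : ℕ))
      rw [zpow_add₀ hw0, zpow_natCast, hx]
      ring
    rw [hsum]
    exact h j (lt_of_lt_of_le j.2 hT)
  intro w hw
  have : ∃ i, v i = w := by
    refine ⟨e.symm ⟨w, hw⟩, ?_⟩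
    simp [v]
  obtain ⟨i, rfl⟩ := this
  have := key i
  have hw0 : v i ≠ 0 := h0 _ (e i).2
  exact (mul_eq_zero.1 this).resolve_right (zpow_ne_zero _ hw0)

/-- Uniqueness for sums of exponentials sampled at `n` consecutive (integer) points. -/
lemma doppler_expsum_match {ι : Type*} [DecidableEq ι] {n : ℕ} (S S' : Finset ι)
    (hcard : S.card + S'.card ≤ n)
    (c c' : ι → ℂ) (z z' : ι → ℂ)
    (hz0 : ∀ s ∈ S, z s ≠ 0) (hz0' : ∀ s ∈ S', z' s ≠ 0)
    (hinj : Set.InjOn z S) (hinj' : Set.InjOn z' S')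
    (hc : ∀ s ∈ S, c s ≠ 0) (hc' : ∀ s ∈ S', c' s ≠ 0)
    (k0 : ℤ)
    (heq : ∀ j : ℕ, j < n → ∑ s ∈ S, c s * z s ^ (k0 + j) = ∑ s ∈ S', c' s * z' s ^ (k0 + j)) :
    ∀ s ∈ S, ∃ s' ∈ S', z' s' = z s ∧ c' s' = c s := by
  classical
  set T : Finset ℂ := S.image z ∪ S'.image z' with hT
  set b : ℂ → ℂ := fun w =>
    (∑ s ∈ S.filter (fun s => z s = w), c s) - (∑ s ∈ S'.filter (fun s => z' s = w), c' s)
    with hb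
  have hTcard : T.card ≤ n := by
    calc T.card ≤ (S.image z).card + (S'.image z').card := Finset.card_union_le _ _
    _ ≤ S.card + S'.card := by
        exact Nat.add_le_add (Finset.card_image_le) (Finset.card_image_le)
    _ ≤ n := hcard
  have hT0 : ∀ w ∈ T, w ≠ 0 := by
    intro w hw
    rcases Finset.mem_union.1 hw with h | h
    · obtain ⟨s, hs, rfl⟩ := Finset.mem_image.1 h; exact hz0 s hs
    · obtain ⟨s, hs, rfl⟩ := Finset.mem_image.1 h; exact hz0' s hs
  have hbz : ∀ w ∈ T, b w = 0 := by
    refine doppler_expsum_zero T hTcard hT0 b k0 fun j hj => ?_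
    have e1 : ∑ w ∈ T, (∑ s ∈ S.filter (fun s => z s = w), c s) * w ^ (k0 + j)
        = ∑ s ∈ S, c s * z s ^ (k0 + j) := by
      rw [← Finset.sum_fiberwise_of_maps_to (g := z)
        (fun s hs => Finset.mem_union.2 (Or.inl (Finset.mem_image_of_mem z hs)))
        (fun s => c s * z s ^ (k0 + j))]
      refine Finset.sum_congr rfl fun w _ => ?_
      rw [Finset.sum_mul]
      refine Finset.sum_congr rfl fun s hs => ?_
      rw [(Finset.mem_filter.1 hs).2]
    have e2 : ∑ w ∈ T, (∑ s ∈ S'.filter (fun s => z' s = w), c' s) * w ^ (k0 + j)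
        = ∑ s ∈ S', c' s * z' s ^ (k0 + j) := by
      rw [← Finset.sum_fiberwise_of_maps_to (g := z')
        (fun s hs => Finset.mem_union.2 (Or.inr (Finset.mem_image_of_mem z' hs)))
        (fun s => c' s * z' s ^ (k0 + j))]
      refine Finset.sum_congr rfl fun w _ => ?_
      rw [Finset.sum_mul]
      refine Finset.sum_congr rfl fun s hs => ?_
      rw [(Finset.mem_filter.1 hs).2]
    calc ∑ w ∈ T, b w * w ^ (k0 + j)
        = ∑ w ∈ T, ((∑ s ∈ S.filter (fun s => z s = w), c s) * w ^ (k0 + j)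
            - (∑ s ∈ S'.filter (fun s => z' s = w), c' s) * w ^ (k0 + j)) := by
          refine Finset.sum_congr rfl fun w _ => ?_
          rw [hb]; ring
    _ = 0 := by rw [Finset.sum_sub_distrib, e1, e2, heq j hj, sub_self]
  intro s hs
  have hwT : z s ∈ T := Finset.mem_union.2 (Or.inl (Finset.mem_image_of_mem z hs))
  have hfilS : S.filter (fun t => z t = z s) = {s} := by
    ext t
    simp only [Finset.mem_filter, Finset.mem_singleton]
    constructor
    · rintro ⟨ht, hzt⟩; exact hinj ht hs hzt
    · rintro rfl; exact ⟨hs, rfl⟩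
  have hb0 := hbz (z s) hwT
  simp only [hb, hfilS, Finset.sum_singleton, sub_eq_zero] at hb0
  have hne : (S'.filter (fun t => z' t = z s)).Nonempty := by
    by_contra hemp
    rw [Finset.not_nonempty_iff_eq_empty] at hemp
    rw [hemp, Finset.sum_empty] at hb0
    exact hc s hs hb0
  obtain ⟨s', hs'⟩ := hne
  have hs'S : s' ∈ S' := (Finset.mem_filter.1 hs').1
  have hzs' : z' s' = z s := (Finset.mem_filter.1 hs').2
  have hfilS' : S'.filter (fun t => z' t = z s) = {s'} := by
    ext t
    simp only [Finset.mem_filter, Finset.mem_singleton]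
    constructor
    · rintro ⟨ht, hzt⟩; exact hinj' ht hs'S (hzt.trans hzs'.symm)
    · rintro rfl; exact ⟨hs'S, hzs'⟩
  rw [hfilS', Finset.sum_singleton] at hb0
  exact ⟨s', hs'S, hzs', hb0.symm⟩

/-- Orthogonality of the discrete Fourier exponentials. -/
lemma doppler_dft_orth (M : ℕ) (hM : 0 < M) (a b : ℕ) (ha : a < M) (hb : b < M) :
    ∑ p ∈ Finset.range M,
      (Complex.exp (-(2 * Real.pi * Complex.I) * a / M) *
        (Complex.exp (-(2 * Real.pi * Complex.I) * b / M))⁻¹) ^ p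
      = if a = b then (M : ℂ) else 0 := by
  have hMc : (M : ℂ) ≠ 0 := Nat.cast_ne_zero.2 hM.ne'
  have hπI : (2 * (Real.pi : ℂ) * Complex.I) ≠ 0 := by
    simp [Real.pi_ne_zero, Complex.I_ne_zero, Complex.ofReal_ne_zero]
  have hu : Complex.exp (-(2 * Real.pi * Complex.I) * a / M) *
      (Complex.exp (-(2 * Real.pi * Complex.I) * b / M))⁻¹
      = Complex.exp ((((b : ℤ) - a : ℤ) : ℂ) * (2 * Real.pi * Complex.I) / M) := by
    rw [← Complex.exp_neg, ← Complex.exp_add]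
    congr 1
    push_cast
    ring
  rw [hu]
  by_cases hab : a = b
  · subst hab
    simp
  · rw [if_neg hab]
    have hne1 : Complex.exp ((((b : ℤ) - a : ℤ) : ℂ) * (2 * Real.pi * Complex.I) / M) ≠ 1 := by
      intro h1
      obtain ⟨n, hn⟩ := Complex.exp_eq_one_iff.1 h1
      have hcast : (((b : ℤ) - a : ℤ) : ℂ) = (n : ℂ) * M := by
        field_simp at hn
        exact mul_right_cancel₀ hπI (by push_cast at hn ⊢; linear_combination (2 * (Real.pi : ℂ) * Complex.I) * hn)
      have hz : ((b : ℤ) - a) = n * M := by exact_mod_cast hcast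
      have haz : (a : ℤ) < M := by exact_mod_cast ha
      have hbz : (b : ℤ) < M := by exact_mod_cast hb
      have ha0 : (0 : ℤ) ≤ a := Int.natCast_nonneg a
      have hb0 : (0 : ℤ) ≤ b := Int.natCast_nonneg b
      have hM0 : (0 : ℤ) < M := by exact_mod_cast hM
      rcases lt_trichotomy n 0 with h | h | h
      · have : n ≤ -1 := by omega
        nlinarith
      · subst h
        simp at hz
        omega
      · have : 1 ≤ n := h
        nlinarith
    rw [geom_sum_eq hne1]
    have hpow : Complex.exp ((((b : ℤ) - a : ℤ) : ℂ) * (2 * Real.pi * Complex.I) / M) ^ M = 1 := by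
      rw [← Complex.exp_nat_mul]
      have : (M : ℂ) * ((((b : ℤ) - a : ℤ) : ℂ) * (2 * Real.pi * Complex.I) / M)
          = (((b : ℤ) - a : ℤ) : ℂ) * (2 * Real.pi * Complex.I) := by
        field_simp
      rw [this]
      exact Complex.exp_int_mul_two_pi_mul_I _
    rw [hpow, sub_self, zero_div]

/-- Injectivity of `t ↦ exp(-2πi t/τ)` on `[0, τ)`. -/
lemma doppler_zf_injOn (τ : ℝ) (hτ : 0 < τ) (t t' : ℝ)
    (ht : t ∈ Set.Ico (0:ℝ) τ) (ht' : t' ∈ Set.Ico (0:ℝ) τ)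
    (h : Complex.exp (-(2 * Real.pi * Complex.I) * t / τ) =
      Complex.exp (-(2 * Real.pi * Complex.I) * t' / τ)) : t = t' := by
  have hτc : (τ : ℂ) ≠ 0 := Complex.ofReal_ne_zero.2 hτ.ne'
  have hπI : (2 * (Real.pi : ℂ) * Complex.I) ≠ 0 := by
    simp [Real.pi_ne_zero, Complex.I_ne_zero, Complex.ofReal_ne_zero]
  obtain ⟨n, hn⟩ := Complex.exp_eq_exp_iff_exists_int.1 h
  have hc : ((t : ℂ)) = (t' : ℂ) - n * τ := by
    have h3 : ((2 * (Real.pi : ℂ) * Complex.I) * (t : ℂ)) * (τ : ℂ)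
        = ((2 * (Real.pi : ℂ) * Complex.I) * ((t' : ℂ) - n * τ)) * (τ : ℂ) := by
      field_simp at hn
      linear_combination -(2 * (Real.pi : ℂ) * Complex.I * (τ : ℂ)) * hn
    exact mul_left_cancel₀ hπI (mul_right_cancel₀ hτc h3)
  have hr : t = t' - n * τ := by
    have : ((t : ℂ)) = (((t' - n * τ : ℝ)) : ℂ) := by push_cast; rw [hc]
    exact_mod_cast this
  have hn0 : n = 0 := by
    rcases lt_trichotomy n 0 with h | h | h
    · have hn1 : n ≤ -1 := by omega
      have : (n : ℝ) ≤ -1 := by exact_mod_cast hn1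
      nlinarith [ht.1, ht.2, ht'.1, ht'.2]
    · exact h
    · have : (1 : ℝ) ≤ n := by exact_mod_cast h
      nlinarith [ht.1, ht.2, ht'.1, ht'.2]
  rw [hn0] at hr
  simpa using hr

/-- Doppler focusing: the DFT over the pulse index isolates one Doppler bin. -/
lemma doppler_dft_focus {L M : ℕ} (hM : 0 < M) (a : Fin L → ℂ) (m : Fin L → Fin M) (m0 : Fin M) :
    ∑ p ∈ Finset.range M, ((Complex.exp (-(2 * Real.pi * Complex.I) * (m0 : ℕ) / M))⁻¹) ^ p *
      ∑ ℓ, a ℓ * (Complex.exp (-(2 * Real.pi * Complex.I) * ((m ℓ : ℕ)) / M)) ^ p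
    = M * ∑ ℓ ∈ Finset.univ.filter (fun ℓ => m ℓ = m0), a ℓ := by
  classical
  have step : ∀ ℓ, ∑ p ∈ Finset.range M,
      ((Complex.exp (-(2 * Real.pi * Complex.I) * (m0 : ℕ) / M))⁻¹) ^ p *
        (a ℓ * (Complex.exp (-(2 * Real.pi * Complex.I) * ((m ℓ : ℕ)) / M)) ^ p)
      = a ℓ * (if m ℓ = m0 then (M : ℂ) else 0) := by
    intro ℓ
    have e1 : ∀ p ∈ Finset.range M,
        ((Complex.exp (-(2 * Real.pi * Complex.I) * (m0 : ℕ) / M))⁻¹) ^ p *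
          (a ℓ * (Complex.exp (-(2 * Real.pi * Complex.I) * ((m ℓ : ℕ)) / M)) ^ p)
        = a ℓ * ((Complex.exp (-(2 * Real.pi * Complex.I) * ((m ℓ : ℕ)) / M) *
            (Complex.exp (-(2 * Real.pi * Complex.I) * (m0 : ℕ) / M))⁻¹)) ^ p := by
      intro p _
      rw [mul_pow]
      ring
    rw [Finset.sum_congr rfl e1, ← Finset.mul_sum,
      doppler_dft_orth M hM (m ℓ) (m0 : ℕ) (m ℓ).2 m0.2]
    congr 1
    by_cases h : m ℓ = m0
    · rw [if_pos h, if_pos (by exact_mod_cast congrArg Fin.val h)]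
    · rw [if_neg h, if_neg (fun hv => h (Fin.ext hv))]
  calc ∑ p ∈ Finset.range M, ((Complex.exp (-(2 * Real.pi * Complex.I) * (m0 : ℕ) / M))⁻¹) ^ p *
      ∑ ℓ, a ℓ * (Complex.exp (-(2 * Real.pi * Complex.I) * ((m ℓ : ℕ)) / M)) ^ p
      = ∑ ℓ, ∑ p ∈ Finset.range M,
        ((Complex.exp (-(2 * Real.pi * Complex.I) * (m0 : ℕ) / M))⁻¹) ^ p *
          (a ℓ * (Complex.exp (-(2 * Real.pi * Complex.I) * ((m ℓ : ℕ)) / M)) ^ p) := by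
        simp_rw [Finset.mul_sum]
        exact Finset.sum_comm
  _ = ∑ ℓ, a ℓ * (if m ℓ = m0 then (M : ℂ) else 0) := Finset.sum_congr rfl fun ℓ _ => step ℓ
  _ = M * ∑ ℓ ∈ Finset.univ.filter (fun ℓ => m ℓ = m0), a ℓ := by
        rw [Finset.mul_sum, Finset.sum_filter]
        refine Finset.sum_congr rfl fun ℓ _ => ?_
        by_cases h : m ℓ = m0 <;> simp [h, mul_comm]

/-- Rewriting a single sample term into DFT × exponential-power form. -/
lemma doppler_term_eq (τ : ℝ) (hτ : 0 < τ) (M : ℕ) (hM : 0 < M) (k0 : ℤ) (j p : ℕ)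
    (aℓ : ℂ) (m : Fin M) (t : ℝ) :
    aℓ * Complex.exp (-Complex.I * (2 * Real.pi * ((m : ℕ) : ℂ) / ((τ : ℂ) * (M : ℂ))) *
        (p : ℂ) * (τ : ℂ)) *
      Complex.exp (-Complex.I * 2 * Real.pi * ((k0 + j : ℤ) : ℂ) * (t : ℂ) / (τ : ℂ))
    = (aℓ * Complex.exp (-(2 * Real.pi * Complex.I) * (t : ℂ) / (τ : ℂ)) ^ (k0 + (j : ℤ))) *
      Complex.exp (-(2 * Real.pi * Complex.I) * ((m : ℕ)) / (M : ℂ)) ^ p := by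
  have hτc : (τ : ℂ) ≠ 0 := Complex.ofReal_ne_zero.2 hτ.ne'
  have hMc : (M : ℂ) ≠ 0 := Nat.cast_ne_zero.2 hM.ne'
  have e1 : Complex.exp (-Complex.I * (2 * Real.pi * ((m : ℕ) : ℂ) / ((τ : ℂ) * (M : ℂ))) *
      (p : ℂ) * (τ : ℂ)) = Complex.exp (-(2 * Real.pi * Complex.I) * ((m : ℕ)) / (M : ℂ)) ^ p := by
    rw [← Complex.exp_nat_mul]
    congr 1
    field_simp
  have e2 : Complex.exp (-Complex.I * 2 * Real.pi * ((k0 + j : ℤ) : ℂ) * (t : ℂ) / (τ : ℂ))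
      = Complex.exp (-(2 * Real.pi * Complex.I) * (t : ℂ) / (τ : ℂ)) ^ (k0 + (j : ℤ)) := by
    rw [← Complex.exp_int_mul]
    congr 1
    push_cast
    ring
  rw [e1, e2]
  ring

end DopplerAux

/-- Theorem 3 (achievability): with Doppler frequencies on a grid of size `M`, `P = M`
pulses and `κn ≥ 2L` consecutive Fourier coefficients `k₀, k₀+1, …` on which the pulse
spectrum does not vanish, the `κn·M` samples `c_p[k]` determine the target parameters
uniquely (up to relabeling of the `L` targets). -/
theorem doppler_focusing_noiseless_uniqueness
    (τ : ℝ) (hτ : 0 < τ) (M L κn : ℕ) (hM : 1 ≤ M) (hκ : 2 * L ≤ κn)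
    (k0 : ℤ) (H : ℝ → ℂ)
    (hH : ∀ j : ℕ, j < κn → H (2 * Real.pi * (k0 + j : ℤ) / τ) ≠ 0)
    (α α' : Fin L → ℂ) (τd τd' : Fin L → ℝ) (mb mb' : Fin L → Fin M)
    (hα : ∀ ℓ, α ℓ ≠ 0) (hα' : ∀ ℓ, α' ℓ ≠ 0)
    (hτd : ∀ ℓ, τd ℓ ∈ Set.Ico (0 : ℝ) τ) (hτd' : ∀ ℓ, τd' ℓ ∈ Set.Ico (0 : ℝ) τ)
    (hdistinct : Function.Injective (fun ℓ => (τd ℓ, mb ℓ)))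
    (hdistinct' : Function.Injective (fun ℓ => (τd' ℓ, mb' ℓ)))
    (hsamples : ∀ p : ℕ, p < M → ∀ j : ℕ, j < κn →
      (1 / (τ : ℂ)) * H (2 * Real.pi * (k0 + j : ℤ) / τ) *
        ∑ ℓ, α ℓ *
          Complex.exp (-Complex.I * (2 * Real.pi * ((mb ℓ : ℕ) : ℂ) / ((τ : ℂ) * (M : ℂ))) *
            (p : ℂ) * (τ : ℂ)) *
          Complex.exp (-Complex.I * 2 * Real.pi * ((k0 + j : ℤ) : ℂ) * (τd ℓ : ℂ) / (τ : ℂ)) =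
      (1 / (τ : ℂ)) * H (2 * Real.pi * (k0 + j : ℤ) / τ) *
        ∑ ℓ, α' ℓ *
          Complex.exp (-Complex.I * (2 * Real.pi * ((mb' ℓ : ℕ) : ℂ) / ((τ : ℂ) * (M : ℂ))) *
            (p : ℂ) * (τ : ℂ)) *
          Complex.exp (-Complex.I * 2 * Real.pi * ((k0 + j : ℤ) : ℂ) * (τd' ℓ : ℂ) / (τ : ℂ))) :
    ∃ e : Fin L ≃ Fin L, ∀ ℓ, α' (e ℓ) = α ℓ ∧ τd' (e ℓ) = τd ℓ ∧ mb' (e ℓ) = mb ℓ := by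
  classical
  have hM0 : 0 < M := hM
  have hτc : (τ : ℂ) ≠ 0 := Complex.ofReal_ne_zero.2 hτ.ne'
  have hMc : (M : ℂ) ≠ 0 := Nat.cast_ne_zero.2 hM0.ne'
  -- Step A: cancel the nonzero prefactor and put samples in exponential-power form
  have hA : ∀ p : ℕ, p < M → ∀ j : ℕ, j < κn →
      ∑ ℓ, (α ℓ * Complex.exp (-(2 * Real.pi * Complex.I) * (τd ℓ : ℂ) / (τ : ℂ)) ^
          (k0 + (j : ℤ))) *
        Complex.exp (-(2 * Real.pi * Complex.I) * ((mb ℓ : ℕ)) / (M : ℂ)) ^ p =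
      ∑ ℓ, (α' ℓ * Complex.exp (-(2 * Real.pi * Complex.I) * (τd' ℓ : ℂ) / (τ : ℂ)) ^
          (k0 + (j : ℤ))) *
        Complex.exp (-(2 * Real.pi * Complex.I) * ((mb' ℓ : ℕ)) / (M : ℂ)) ^ p := by
    intro p hp j hj
    have key := hsamples p hp j hj
    have hfac : (1 / (τ : ℂ)) * H (2 * Real.pi * (k0 + j : ℤ) / τ) ≠ 0 :=
      mul_ne_zero (one_div_ne_zero hτc) (hH j hj)
    have key2 := mul_left_cancel₀ hfac key
    calc ∑ ℓ, (α ℓ * Complex.exp (-(2 * Real.pi * Complex.I) * (τd ℓ : ℂ) / (τ : ℂ)) ^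
            (k0 + (j : ℤ))) *
          Complex.exp (-(2 * Real.pi * Complex.I) * ((mb ℓ : ℕ)) / (M : ℂ)) ^ p
        = ∑ ℓ, α ℓ *
            Complex.exp (-Complex.I * (2 * Real.pi * ((mb ℓ : ℕ) : ℂ) / ((τ : ℂ) * (M : ℂ))) *
              (p : ℂ) * (τ : ℂ)) *
            Complex.exp (-Complex.I * 2 * Real.pi * ((k0 + j : ℤ) : ℂ) * (τd ℓ : ℂ) / (τ : ℂ)) :=
          Finset.sum_congr rfl fun ℓ _ =>
            (doppler_term_eq τ hτ M hM0 k0 j p (α ℓ) (mb ℓ) (τd ℓ)).symm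
    _ = ∑ ℓ, α' ℓ *
            Complex.exp (-Complex.I * (2 * Real.pi * ((mb' ℓ : ℕ) : ℂ) / ((τ : ℂ) * (M : ℂ))) *
              (p : ℂ) * (τ : ℂ)) *
            Complex.exp (-Complex.I * 2 * Real.pi * ((k0 + j : ℤ) : ℂ) * (τd' ℓ : ℂ) / (τ : ℂ)) :=
          key2
    _ = ∑ ℓ, (α' ℓ * Complex.exp (-(2 * Real.pi * Complex.I) * (τd' ℓ : ℂ) / (τ : ℂ)) ^
            (k0 + (j : ℤ))) *
          Complex.exp (-(2 * Real.pi * Complex.I) * ((mb' ℓ : ℕ)) / (M : ℂ)) ^ p :=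
          Finset.sum_congr rfl fun ℓ _ =>
            doppler_term_eq τ hτ M hM0 k0 j p (α' ℓ) (mb' ℓ) (τd' ℓ)
  -- Step B: focus on a Doppler bin
  have hC : ∀ m0 : Fin M, ∀ j : ℕ, j < κn →
      ∑ ℓ ∈ Finset.univ.filter (fun t => mb t = m0),
        α ℓ * Complex.exp (-(2 * Real.pi * Complex.I) * (τd ℓ : ℂ) / (τ : ℂ)) ^ (k0 + (j : ℤ)) =
      ∑ ℓ ∈ Finset.univ.filter (fun t => mb' t = m0),
        α' ℓ * Complex.exp (-(2 * Real.pi * Complex.I) * (τd' ℓ : ℂ) / (τ : ℂ)) ^ (k0 + (j : ℤ)) := by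
    intro m0 j hj
    have h1 : ∑ p ∈ Finset.range M,
        ((Complex.exp (-(2 * Real.pi * Complex.I) * (m0 : ℕ) / (M : ℂ)))⁻¹) ^ p *
          ∑ ℓ, (α ℓ * Complex.exp (-(2 * Real.pi * Complex.I) * (τd ℓ : ℂ) / (τ : ℂ)) ^
              (k0 + (j : ℤ))) *
            Complex.exp (-(2 * Real.pi * Complex.I) * ((mb ℓ : ℕ)) / (M : ℂ)) ^ p
        = (M : ℂ) * ∑ ℓ ∈ Finset.univ.filter (fun t => mb t = m0),
            α ℓ * Complex.exp (-(2 * Real.pi * Complex.I) * (τd ℓ : ℂ) / (τ : ℂ)) ^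
              (k0 + (j : ℤ)) :=
      doppler_dft_focus hM0 _ mb m0
    have h2 : ∑ p ∈ Finset.range M,
        ((Complex.exp (-(2 * Real.pi * Complex.I) * (m0 : ℕ) / (M : ℂ)))⁻¹) ^ p *
          ∑ ℓ, (α' ℓ * Complex.exp (-(2 * Real.pi * Complex.I) * (τd' ℓ : ℂ) / (τ : ℂ)) ^
              (k0 + (j : ℤ))) *
            Complex.exp (-(2 * Real.pi * Complex.I) * ((mb' ℓ : ℕ)) / (M : ℂ)) ^ p
        = (M : ℂ) * ∑ ℓ ∈ Finset.univ.filter (fun t => mb' t = m0),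
            α' ℓ * Complex.exp (-(2 * Real.pi * Complex.I) * (τd' ℓ : ℂ) / (τ : ℂ)) ^
              (k0 + (j : ℤ)) :=
      doppler_dft_focus hM0 _ mb' m0
    have hmid : (M : ℂ) * ∑ ℓ ∈ Finset.univ.filter (fun t => mb t = m0),
        α ℓ * Complex.exp (-(2 * Real.pi * Complex.I) * (τd ℓ : ℂ) / (τ : ℂ)) ^ (k0 + (j : ℤ))
        = (M : ℂ) * ∑ ℓ ∈ Finset.univ.filter (fun t => mb' t = m0),
          α' ℓ * Complex.exp (-(2 * Real.pi * Complex.I) * (τd' ℓ : ℂ) / (τ : ℂ)) ^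
            (k0 + (j : ℤ)) := by
      rw [← h1, ← h2]
      refine Finset.sum_congr rfl fun p hp => ?_
      rw [hA p (Finset.mem_range.1 hp) j hj]
    exact mul_left_cancel₀ hMc hmid
  -- Step C: per-bin uniqueness via the Vandermonde argument
  have hmain : ∀ ℓ : Fin L, ∃ ℓ' : Fin L, mb' ℓ' = mb ℓ ∧ τd' ℓ' = τd ℓ ∧ α' ℓ' = α ℓ := by
    intro ℓ
    set m0 := mb ℓ with hm0
    set S : Finset (Fin L) := Finset.univ.filter (fun t => mb t = m0) with hS
    set S' : Finset (Fin L) := Finset.univ.filter (fun t => mb' t = m0) with hS'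
    have hcard : S.card + S'.card ≤ κn := by
      have h1 : S.card ≤ L := le_trans (Finset.card_filter_le _ _) (by simp)
      have h2 : S'.card ≤ L := le_trans (Finset.card_filter_le _ _) (by simp)
      omega
    have hinj : Set.InjOn (fun t => Complex.exp (-(2 * Real.pi * Complex.I) * (τd t : ℂ) / (τ : ℂ)))
        (S : Set (Fin L)) := by
      intro t1 h1 t2 h2 hz
      have ht1 : mb t1 = m0 := (Finset.mem_filter.1 h1).2
      have ht2 : mb t2 = m0 := (Finset.mem_filter.1 h2).2
      have heq : τd t1 = τd t2 := doppler_zf_injOn τ hτ _ _ (hτd t1) (hτd t2) hz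
      exact hdistinct (by simp [Prod.ext_iff, heq, ht1, ht2])
    have hinj' : Set.InjOn
        (fun t => Complex.exp (-(2 * Real.pi * Complex.I) * (τd' t : ℂ) / (τ : ℂ)))
        (S' : Set (Fin L)) := by
      intro t1 h1 t2 h2 hz
      have ht1 : mb' t1 = m0 := (Finset.mem_filter.1 h1).2
      have ht2 : mb' t2 = m0 := (Finset.mem_filter.1 h2).2
      have heq : τd' t1 = τd' t2 := doppler_zf_injOn τ hτ _ _ (hτd' t1) (hτd' t2) hz
      exact hdistinct' (by simp [Prod.ext_iff, heq, ht1, ht2])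
    have hmatch := doppler_expsum_match S S' hcard α α'
      (fun t => Complex.exp (-(2 * Real.pi * Complex.I) * (τd t : ℂ) / (τ : ℂ)))
      (fun t => Complex.exp (-(2 * Real.pi * Complex.I) * (τd' t : ℂ) / (τ : ℂ)))
      (fun s _ => Complex.exp_ne_zero _) (fun s _ => Complex.exp_ne_zero _)
      hinj hinj' (fun s _ => hα s) (fun s _ => hα' s) k0
      (fun j hj => hC m0 j hj)
    have hℓS : ℓ ∈ S := by simp [hS, hm0]
    obtain ⟨s', hs'S', hzz, hcc⟩ := hmatch ℓ hℓS
    refine ⟨s', (Finset.mem_filter.1 hs'S').2, ?_, hcc⟩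
    exact doppler_zf_injOn τ hτ _ _ (hτd' s') (hτd ℓ) hzz
  -- Step D: assemble the bijection
  let f : Fin L → Fin L := fun ℓ => (hmain ℓ).choose
  have hf : ∀ ℓ, mb' (f ℓ) = mb ℓ ∧ τd' (f ℓ) = τd ℓ ∧ α' (f ℓ) = α ℓ :=
    fun ℓ => (hmain ℓ).choose_spec
  have hfinj : Function.Injective f := by
    intro ℓ1 ℓ2 h12
    apply hdistinct
    have e1 := hf ℓ1
    have e2 := hf ℓ2
    rw [h12] at e1
    simp only [Prod.ext_iff]
    exact ⟨e1.2.1 ▸ e2.2.1.symm ▸ rfl, e1.1 ▸ e2.1.symm ▸ rfl⟩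
  have hfbij : Function.Bijective f := Finite.injective_iff_bijective.1 hfinj
  refine ⟨Equiv.ofBijective f hfbij, fun ℓ => ?_⟩
  have := hf ℓ
  exact ⟨this.2.2, this.2.1, this.1⟩
end
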